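/- (Affine distance of a radial light ray in a Robertson–Walker spacetime.) Let t₁ < t₀ be real numbers and let a : ℝ → ℝ be continuous and positive on [t₁, t₀]. Suppose d > 0 and λ : [0, d] → [t₁, t₀] is differentiable with λ(0) = t₀, λ(d) = t₁, and λ′(s) = −a(t₀)/a(λ(s)) for all s ∈ [0, d]. Then d = (1/a(t₀)) ∫_{t₁}^{t₀} a(t) dt. -/

import Mathlib

noncomputable section

open Set Topology Filter

/-- Affine distance of a radial light ray in a Robertson–Walker spacetime:
if `λ` solves `λ'(s) = −a(t₀)/a(λ(s))` on `[0,d]` with `λ(0) = t₀` and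
`λ(d) = t₁`, then `d = (1/a(t₀)) ∫_{t₁}^{t₀} a(t) dt`. -/
theorem rw_affine_distance (t₁ t₀ d : ℝ) (a lam : ℝ → ℝ)
    (ht : t₁ < t₀)
    (ha_cont : ContinuousOn a (Icc t₁ t₀))
    (ha_pos : ∀ t ∈ Icc t₁ t₀, 0 < a t)
    (hd : 0 < d)
    (hmaps : ∀ s ∈ Icc (0 : ℝ) d, lam s ∈ Icc t₁ t₀)
    (h0 : lam 0 = t₀) (h1 : lam d = t₁)
    (hode : ∀ s ∈ Icc (0 : ℝ) d,
      HasDerivWithinAt lam (-(a t₀ / a (lam s))) (Icc 0 d) s) :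
    d = (1 / a t₀) * ∫ t in t₁..t₀, a t := by
  set F : ℝ → ℝ := fun u => ∫ t in t₁..u, a t with hF
  have ht₀ : t₀ ∈ Icc t₁ t₀ := ⟨ht.le, le_rfl⟩
  have ha0 : 0 < a t₀ := ha_pos t₀ ht₀
  -- F has derivative a u within Icc t₁ t₀ at each u ∈ Icc t₁ t₀
  have hFderiv : ∀ u ∈ Icc t₁ t₀, HasDerivWithinAt F (a u) (Icc t₁ t₀) u := by
    intro u hu
    haveI : Fact (u ∈ Icc t₁ t₀) := ⟨hu⟩
    have hint : IntervalIntegrable a MeasureTheory.volume t₁ u := by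
      apply ContinuousOn.intervalIntegrable
      apply ha_cont.mono
      rw [uIcc_of_le hu.1]
      exact Icc_subset_Icc le_rfl hu.2
    exact intervalIntegral.integral_hasDerivWithinAt_right hint
      (ha_cont.stronglyMeasurableAtFilter_nhdsWithin measurableSet_Icc u)
      (ha_cont.continuousWithinAt hu)
  -- g s = F (lam s) + a t₀ * s has derivative 0 within Icc 0 d
  set g : ℝ → ℝ := fun s => F (lam s) + a t₀ * s with hg
  have hgderiv : ∀ s ∈ Icc (0 : ℝ) d, HasDerivWithinAt g 0 (Icc 0 d) s := by
    intro s hs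
    have hls := hmaps s hs
    have hcomp : HasDerivWithinAt (fun s => F (lam s))
        (a (lam s) * (-(a t₀ / a (lam s)))) (Icc 0 d) s :=
      (hFderiv (lam s) hls).comp s (hode s hs) (fun x hx => hmaps x hx)
    have hlin : HasDerivWithinAt (fun s : ℝ => a t₀ * s) (a t₀) (Icc 0 d) s :=
      by simpa using ((hasDerivAt_id s).const_mul (a t₀)).hasDerivWithinAt
    have := hcomp.add hlin
    have hz : a (lam s) ≠ 0 := (ha_pos _ hls).ne'
    have e : a (lam s) * -(a t₀ / a (lam s)) + a t₀ = 0 := by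
      rw [mul_neg, ← mul_div_assoc, mul_div_cancel_left₀ _ hz]
      ring
    rw [e] at this
    exact this
  -- hence g is constant on Icc 0 d
  have hconst : ∀ s ∈ Icc (0 : ℝ) d, g s = g 0 := by
    apply constant_of_has_deriv_right_zero
    · exact fun s hs => (hgderiv s hs).continuousWithinAt
    · intro x hx
      refine (hgderiv x ⟨hx.1, hx.2.le⟩).mono_of_mem_nhdsWithin ?_
      have h1 : Ico x d ∈ 𝓝[Ici x] x :=
        inter_mem_nhdsWithin (Ici x) (Iio_mem_nhds hx.2)
      exact Filter.mem_of_superset h1 (fun y hy => ⟨hx.1.trans hy.1, hy.2.le⟩)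
  -- evaluate at d
  have hgd := hconst d ⟨hd.le, le_rfl⟩
  have hF1 : F t₁ = 0 := by simp [hF]
  rw [hg] at hgd
  simp only [h0, h1, hF1, mul_zero, add_zero, zero_add] at hgd
  have : a t₀ * d = F t₀ := by linarith
  rw [hF] at this
  field_simp
  linarith
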